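/- Let h ∈ C((0,∞), ℝ) satisfy ∫₀^∞ s |h(s)| ds < ∞, ∫₀^∞ |h(s)| ds < ∞, and the reflection identity h(1/t) = −t·h(t) for all t > 0. For suitable integrable functions φ : [0,∞) → ℝ and v : (−∞,0] → ℝ (bounded, with the relevant double integrals absolutely convergent), define ε⁻v(t) = ∫₀^∞ h(s) v(−st) ds for t ≥ 0 and εφ(τ) = ∫₀^∞ h(σ) φ(−στ) dσ for τ ≤ 0. Then ∫₀^∞ φ(t) · ε⁻v(t) dt = −∫_{−∞}^0 (εφ)(τ) · v(τ) dτ. -/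

import Mathlib

open MeasureTheory

section Aux

/-- The change-of-variables map `(t, s) ↦ (τ, σ) = (-(s*t), 1/s)`. -/
private noncomputable def Φ : ℝ × ℝ → ℝ × ℝ := fun p => (-(p.2 * p.1), p.2⁻¹)

private noncomputable def Φderiv : ℝ × ℝ → (ℝ × ℝ →L[ℝ] ℝ × ℝ) := fun p =>
  LinearMap.toContinuousLinearMap (Matrix.toLin (Module.Basis.finTwoProd ℝ) (Module.Basis.finTwoProd ℝ)
    !![-p.2, -p.1; 0, -(p.2 ^ 2)⁻¹])

private lemma hasFDerivAt_Φ (p : ℝ × ℝ) (hp : p.2 ≠ 0) :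
    HasFDerivAt Φ (Φderiv p) p := by
  unfold Φ Φderiv
  rw [Matrix.toLin_finTwoProd_toContinuousLinearMap]
  have h1 : HasFDerivAt (fun q : ℝ × ℝ => -(q.2 * q.1))
      (-(p.2 • ContinuousLinearMap.fst ℝ ℝ ℝ + p.1 • ContinuousLinearMap.snd ℝ ℝ ℝ)) p :=
    (hasFDerivAt_snd.mul hasFDerivAt_fst).neg
  have h2 : HasFDerivAt (fun q : ℝ × ℝ => q.2⁻¹)
      ((-(p.2 ^ 2)⁻¹) • ContinuousLinearMap.snd ℝ ℝ ℝ) p :=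
    (hasDerivAt_inv hp).comp_hasFDerivAt p hasFDerivAt_snd
  refine (HasFDerivAt.prodMk h1 h2).congr_fderiv ?_
  ext q <;> simp [neg_smul] <;> ring

private lemma Φderiv_det (p : ℝ × ℝ) (hp : p.2 ≠ 0) : (Φderiv p).det = p.2⁻¹ := by
  unfold Φderiv
  simp only [LinearMap.det_toContinuousLinearMap, LinearMap.det_toLin, Matrix.det_fin_two_of]
  field_simp
  ring

private lemma Φ_injOn : Set.InjOn Φ (Set.Ioi (0:ℝ) ×ˢ Set.Ioi (0:ℝ)) := by
  rintro ⟨t, s⟩ ⟨ht, hs⟩ ⟨t', s'⟩ ⟨ht', hs'⟩ hE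
  simp only [Φ, Prod.mk.injEq] at hE
  have hss : s = s' := inv_injective hE.2
  subst hss
  have hs0 : s ≠ 0 := ne_of_gt (Set.mem_Ioi.mp hs)
  have htt : t = t' := by
    have h1 : s * t = s * t' := by linarith [hE.1]
    exact mul_left_cancel₀ hs0 h1
  simp [htt]

private lemma Φ_image :
    Φ '' (Set.Ioi (0:ℝ) ×ˢ Set.Ioi (0:ℝ)) = Set.Iio (0:ℝ) ×ˢ Set.Ioi (0:ℝ) := by
  ext q
  constructor
  · rintro ⟨⟨t, s⟩, ⟨ht, hs⟩, rfl⟩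
    simp only [Set.mem_prod, Set.mem_Ioi] at ht hs
    constructor
    · simp only [Φ, Set.mem_Iio]
      have : 0 < s * t := mul_pos hs ht
      linarith
    · simpa [Φ] using inv_pos.mpr hs
  · rintro ⟨hτ, hσ⟩
    obtain ⟨τ, σ⟩ := q
    simp only [Set.mem_Iio] at hτ
    simp only [Set.mem_Ioi] at hσ
    have hσ0 : σ ≠ 0 := ne_of_gt hσ
    refine ⟨(-(τ * σ), σ⁻¹), ⟨?_, ?_⟩, ?_⟩
    · have : τ * σ < 0 := mul_neg_of_neg_of_pos hτ hσ
      simpa using by linarith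
    · exact inv_pos.mpr hσ
    · simp only [Φ, inv_inv, Prod.mk.injEq]
      exact ⟨by field_simp, trivial⟩

end Aux

/-- Duality identity for the extension kernels: if `h ∈ C((0,∞))` satisfies
`∫₀^∞ |h| < ∞`, `∫₀^∞ s|h(s)| ds < ∞` and `h(1/t) = −t·h(t)`, and the double
integral is absolutely convergent, then
`∫₀^∞ φ(t)·ε⁻v(t) dt = −∫_{−∞}^0 (εφ)(τ)·v(τ) dτ`, where
`ε⁻v(t) = ∫₀^∞ h(s) v(−st) ds` and `εφ(τ) = ∫₀^∞ h(σ) φ(−στ) dσ`. -/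
theorem stmt_16 (h : ℝ → ℝ) (hcont : ContinuousOn h (Set.Ioi 0))
    (hint : IntegrableOn h (Set.Ioi 0))
    (hint' : IntegrableOn (fun s => s * h s) (Set.Ioi 0))
    (hrefl : ∀ t : ℝ, 0 < t → h (1 / t) = -t * h t)
    (φ v : ℝ → ℝ) (hφ : Measurable φ) (hv : Measurable v)
    (hprod : IntegrableOn
      (fun p : ℝ × ℝ => φ p.1 * (h p.2 * v (-(p.2 * p.1))))
      (Set.Ioi 0 ×ˢ Set.Ioi 0)) :
    ∫ t in Set.Ioi (0 : ℝ), φ t * ∫ s in Set.Ioi (0 : ℝ), h s * v (-(s * t)) =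
      -∫ τ in Set.Iio (0 : ℝ),
        (∫ σ in Set.Ioi (0 : ℝ), h σ * φ (-(σ * τ))) * v τ := by
  set A : Set (ℝ × ℝ) := Set.Ioi (0:ℝ) ×ˢ Set.Ioi (0:ℝ) with hA_def
  have hA : MeasurableSet A := measurableSet_Ioi.prod measurableSet_Ioi
  have hfd : ∀ p ∈ A, HasFDerivWithinAt Φ (Φderiv p) A p := fun p hp =>
    (hasFDerivAt_Φ p (ne_of_gt (Set.mem_Ioi.mp hp.2))).hasFDerivWithinAt
  set f : ℝ × ℝ → ℝ := fun p => φ p.1 * (h p.2 * v (-(p.2 * p.1))) with hf_def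
  set G : ℝ × ℝ → ℝ := fun q => (h q.2 * φ (-(q.2 * q.1))) * v q.1 with hG_def
  -- the key pointwise identity on `A`
  have key : ∀ p ∈ A, |(Φderiv p).det| • G (Φ p) = -(f p) := by
    rintro ⟨t, s⟩ ⟨ht, hs⟩
    simp only [Set.mem_Ioi] at ht hs
    have hs0 : s ≠ 0 := ne_of_gt hs
    have hdet : |(Φderiv (t, s)).det| = s⁻¹ := by
      rw [Φderiv_det _ hs0]; exact abs_of_pos (inv_pos.mpr hs)
    have harg : -(s⁻¹ * -(s * t)) = t := by field_simp
    have hh : h s⁻¹ = -s * h s := by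
      have := hrefl s hs
      rwa [one_div] at this
    simp only [Φ, hG_def, hf_def, hdet, harg, hh, smul_eq_mul]
    field_simp
  -- the transformed function is integrable on the image set
  have hGint : IntegrableOn G (Set.Iio (0:ℝ) ×ˢ Set.Ioi (0:ℝ)) := by
    rw [← Φ_image, integrableOn_image_iff_integrableOn_abs_det_fderiv_smul volume hA hfd Φ_injOn G]
    exact IntegrableOn.congr_fun hprod.neg (fun p hp => (key p hp).symm) hA
  -- change of variables for the integral
  have hImg : (∫ q in Set.Iio (0:ℝ) ×ˢ Set.Ioi (0:ℝ), G q) = -∫ p in A, f p := by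
    rw [← Φ_image, integral_image_eq_integral_abs_det_fderiv_smul volume hA hfd Φ_injOn G,
      setIntegral_congr_fun hA key, integral_neg]
  -- rewrite LHS as an integral over the product set
  have hf : Integrable (Function.uncurry fun t s => φ t * (h s * v (-(s * t))))
      ((volume.restrict (Set.Ioi (0:ℝ))).prod (volume.restrict (Set.Ioi (0:ℝ)))) := by
    rw [Measure.prod_restrict, ← Measure.volume_eq_prod]; exact hprod
  have hL : (∫ t in Set.Ioi (0:ℝ), φ t * ∫ s in Set.Ioi (0:ℝ), h s * v (-(s * t)))
      = ∫ p in A, f p := by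
    calc ∫ t in Set.Ioi (0:ℝ), φ t * ∫ s in Set.Ioi (0:ℝ), h s * v (-(s * t))
        = ∫ t in Set.Ioi (0:ℝ), ∫ s in Set.Ioi (0:ℝ), φ t * (h s * v (-(s * t))) :=
          integral_congr_ae (Filter.Eventually.of_forall fun t =>
            (integral_const_mul (φ t) _).symm)
      _ = ∫ p : ℝ × ℝ, φ p.1 * (h p.2 * v (-(p.2 * p.1)))
            ∂((volume.restrict (Set.Ioi (0:ℝ))).prod (volume.restrict (Set.Ioi (0:ℝ)))) :=
          integral_integral hf
      _ = ∫ p in A, f p := by rw [Measure.prod_restrict, ← Measure.volume_eq_prod]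
  -- rewrite RHS as an integral over the product set
  have hG : Integrable (Function.uncurry fun τ σ => (h σ * φ (-(σ * τ))) * v τ)
      ((volume.restrict (Set.Iio (0:ℝ))).prod (volume.restrict (Set.Ioi (0:ℝ)))) := by
    rw [Measure.prod_restrict, ← Measure.volume_eq_prod]; exact hGint
  have hR : (∫ τ in Set.Iio (0:ℝ), (∫ σ in Set.Ioi (0:ℝ), h σ * φ (-(σ * τ))) * v τ)
      = ∫ q in Set.Iio (0:ℝ) ×ˢ Set.Ioi (0:ℝ), G q := by
    calc ∫ τ in Set.Iio (0:ℝ), (∫ σ in Set.Ioi (0:ℝ), h σ * φ (-(σ * τ))) * v τ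
        = ∫ τ in Set.Iio (0:ℝ), ∫ σ in Set.Ioi (0:ℝ), (h σ * φ (-(σ * τ))) * v τ :=
          integral_congr_ae (Filter.Eventually.of_forall fun τ =>
            (integral_mul_const (v τ) _).symm)
      _ = ∫ q : ℝ × ℝ, (h q.2 * φ (-(q.2 * q.1))) * v q.1
            ∂((volume.restrict (Set.Iio (0:ℝ))).prod (volume.restrict (Set.Ioi (0:ℝ)))) :=
          integral_integral hG
      _ = ∫ q in Set.Iio (0:ℝ) ×ˢ Set.Ioi (0:ℝ), G q := by
          rw [Measure.prod_restrict, ← Measure.volume_eq_prod]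
  rw [hL, hR, hImg, neg_neg]
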